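/- Let n be even, let A be an abelian group of order n, and let G = D(A) act on the n left cosets of H = ⟨x⟩. Let D = {d, d⁻¹} ⊆ Der(G). Then α(Cay(G, Der(G) \ D)) ∈ {2, 4, 6}; more precisely it equals 6 if and only if d ∈ A and d has order 3; it equals 4 if and only if d does not have order 3 and d = a² for some a ∈ A; and it equals 2 otherwise. -/

import Mathlib

/-- The Cayley graph of a group `Γ` with (inverse-closed) connection set `C`:
`g` and `h` are adjacent iff they are distinct and `g⁻¹ * h ∈ C` (symmetrized). -/
def cayley (Γ : Type*) [Group Γ] (C : Set Γ) : SimpleGraph Γ where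
  Adj g h := g ≠ h ∧ g⁻¹ * h ∈ C ∧ h⁻¹ * g ∈ C
  symm := ⟨fun _ _ ⟨hne, h1, h2⟩ => ⟨hne.symm, h2, h1⟩⟩
  loopless := ⟨fun _ ⟨hne, _⟩ => hne rfl⟩

/-- A set of vertices of a graph is independent if its elements are pairwise non-adjacent. -/
def IsIndepSet {V : Type*} (X : SimpleGraph V) (s : Set V) : Prop :=
  s.Pairwise fun a b => ¬ X.Adj a b

/-- The independence number of a graph: the maximum size of an independent set. -/
noncomputable def indepNum {V : Type*} (X : SimpleGraph V) : ℕ :=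
  sSup {k | ∃ s : Finset V, IsIndepSet X ↑s ∧ s.card = k}

/-- The set of derangements of a permutation group `G ≤ Sym(n)`: the elements of `G`
fixing no point of `{1,…,n}`. -/
def der {n : ℕ} (G : Subgroup (Equiv.Perm (Fin n))) : Set G :=
  {σ : G | ∀ i : Fin n, (σ : Equiv.Perm (Fin n)) i ≠ i}
/-- The set of derangements of the action of `G` on the left cosets of `H`:
the elements of `G` fixing no coset. -/
def derQ (G : Type*) [Group G] (H : Subgroup G) : Set G :=
  {g : G | ∀ c : G ⧸ H, g • c ≠ c}


section aux
variable {G : Type*} [Group G]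

lemma xinv {x : G} (hx2 : x ^ 2 = 1) : x⁻¹ = x :=
  inv_eq_of_mul_eq_one_right (by rw [← pow_two, hx2])

lemma mem_zpow {x : G} (hx2 : x ^ 2 = 1) (g : G) :
    g ∈ Subgroup.zpowers x ↔ g = 1 ∨ g = x := by
  constructor
  · rintro ⟨k, rfl⟩
    rcases Int.even_or_odd k with ⟨m, rfl⟩ | ⟨m, rfl⟩
    · left
      show x ^ (m + m) = 1
      rw [← two_mul, zpow_mul, zpow_two, ← pow_two, hx2, one_zpow]
    · right
      show x ^ (2 * m + 1) = x
      rw [zpow_add, zpow_mul, zpow_two, ← pow_two, hx2, one_zpow, one_mul, zpow_one]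
  · rintro (rfl | rfl)
    · exact one_mem _
    · exact Subgroup.mem_zpowers _

lemma derQ_iff {x : G} (hx2 : x ^ 2 = 1) (g : G) :
    g ∈ derQ G (Subgroup.zpowers x) ↔ ∀ c : G, c⁻¹ * g * c ≠ 1 ∧ c⁻¹ * g * c ≠ x := by
  constructor
  · intro hg c
    have h := hg (c : G ⧸ Subgroup.zpowers x)
    have h2 : ¬ ((g * c : G) : G ⧸ Subgroup.zpowers x) = (c : G) := h
    rw [QuotientGroup.eq] at h2
    have h3 : (g * c)⁻¹ * c = c⁻¹ * g⁻¹ * c := by group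
    rw [h3, mem_zpow hx2] at h2
    push_neg at h2
    constructor
    · intro hcon
      apply h2.1
      have : (c⁻¹ * g * c)⁻¹ = 1 := by rw [hcon]; simp
      have h4 : (c⁻¹ * g * c)⁻¹ = c⁻¹ * g⁻¹ * c := by group
      rw [h4] at this; exact this
    · intro hcon
      apply h2.2
      have : (c⁻¹ * g * c)⁻¹ = x⁻¹ := by rw [hcon]
      have h4 : (c⁻¹ * g * c)⁻¹ = c⁻¹ * g⁻¹ * c := by group
      rw [h4, xinv hx2] at this; exact this
  · intro hg q hq
    obtain ⟨c, rfl⟩ := QuotientGroup.mk_surjective q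
    have h2 : ((g * c : G) : G ⧸ Subgroup.zpowers x) = (c : G) := hq
    rw [QuotientGroup.eq] at h2
    have h3 : (g * c)⁻¹ * c = c⁻¹ * g⁻¹ * c := by group
    rw [h3, mem_zpow hx2] at h2
    rcases h2 with h2 | h2
    · exact (hg c).1 (by
        have : (c⁻¹ * g⁻¹ * c)⁻¹ = 1 := by rw [h2]; simp
        have h4 : (c⁻¹ * g⁻¹ * c)⁻¹ = c⁻¹ * g * c := by group
        rwa [h4] at this)
    · exact (hg c).2 (by
        have : (c⁻¹ * g⁻¹ * c)⁻¹ = x⁻¹ := by rw [h2]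
        have h4 : (c⁻¹ * g⁻¹ * c)⁻¹ = c⁻¹ * g * c := by group
        rw [h4, xinv hx2] at this; exact this)



end aux
section aux2
variable {G : Type*} [Group G] {A : Subgroup G} {x : G}

-- x * a = a⁻¹ * x
lemma xmul (hx2 : x ^ 2 = 1) (hconj : ∀ a ∈ A, x * a * x = a⁻¹)
    {a : G} (ha : a ∈ A) : x * a = a⁻¹ * x := by
  have h := hconj a ha
  have : x * a * x * x = a⁻¹ * x := by rw [h]
  rwa [mul_assoc (x*a) x x, ← pow_two, hx2, mul_one] at this

-- decomposition: g ∉ A → g * x ∈ A (so g = (g*x) * x)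
lemma decompB (hx2 : x ^ 2 = 1) (hxA : x ∉ A) (hindex : A.index = 2)
    {g : G} (hg : g ∉ A) : g * x ∈ A := by
  obtain ⟨a, ha⟩ := Subgroup.index_eq_two_iff.mp hindex
  have hx' : x * a ∈ A := ((ha x).or.resolve_right hxA)
  have hg' : g * a ∈ A := ((ha g).or.resolve_right hg)
  have : (g * a) * (x * a)⁻¹ ∈ A := A.mul_mem hg' (A.inv_mem hx')
  have he : (g * a) * (x * a)⁻¹ = g * x⁻¹ := by group
  rw [he, xinv hx2] at this
  exact this

lemma gx_eq (hx2 : x ^ 2 = 1) (g : G) : (g * x) * x = g := by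
  rw [mul_assoc, ← pow_two, hx2, mul_one]

-- conjugation preserves A
lemma conjA (hx2 : x ^ 2 = 1) (hxA : x ∉ A) (hindex : A.index = 2)
    (hcomm : ∀ a ∈ A, ∀ b ∈ A, a * b = b * a)
    (hconj : ∀ a ∈ A, x * a * x = a⁻¹)
    {a : G} (ha : a ∈ A) (c : G) : c⁻¹ * a * c ∈ A := by
  by_cases hc : c ∈ A
  · have : c⁻¹ * a * c = a := by
      rw [mul_assoc, hcomm a ha c hc, ← mul_assoc, inv_mul_cancel, one_mul]
    rw [this]; exact ha
  · have hb : c * x ∈ A := decompB hx2 hxA hindex hc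
    set b := c * x with hbdef
    have hc' : c = b * x := (gx_eq hx2 c).symm
    have e : c⁻¹ * a * c = x⁻¹ * (b⁻¹ * a * b) * x := by rw [hc']; group
    have hmem : b⁻¹ * a * b ∈ A := by
      have : b⁻¹ * a * b = a := by
        rw [mul_assoc, hcomm a ha b hb, ← mul_assoc, inv_mul_cancel, one_mul]
      rw [this]; exact ha
    have e2 : x⁻¹ * (b⁻¹ * a * b) * x = (b⁻¹ * a * b)⁻¹ := by
      rw [xinv hx2]
      have := hconj _ hmem
      rw [this]
    rw [e, e2]; exact A.inv_mem hmem

end aux2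

section aux3
variable {G : Type*} [Group G] {A : Subgroup G} {x : G}

lemma notDer_iff (hx2 : x ^ 2 = 1) (hxA : x ∉ A) (hindex : A.index = 2)
    (hcomm : ∀ a ∈ A, ∀ b ∈ A, a * b = b * a)
    (hconj : ∀ a ∈ A, x * a * x = a⁻¹) (g : G) :
    g ∉ derQ G (Subgroup.zpowers x) ↔ g = 1 ∨ ∃ a ∈ A, g = a ^ 2 * x := by
  rw [derQ_iff hx2]
  push_neg
  constructor
  · rintro ⟨c, hc⟩
    by_cases h1 : c⁻¹ * g * c = 1
    · left
      have hc := h1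
      have : c * (c⁻¹ * g * c) * c⁻¹ = c * 1 * c⁻¹ := by rw [hc]
      have h2 : c * (c⁻¹ * g * c) * c⁻¹ = g := by group
      rw [h2] at this; rw [this]; group
    · right
      have hc := hc h1
      have hg : g = c * x * c⁻¹ := by
        have : c * (c⁻¹ * g * c) * c⁻¹ = c * x * c⁻¹ := by rw [hc]
        have h2 : c * (c⁻¹ * g * c) * c⁻¹ = g := by group
        rw [h2] at this; exact this
      by_cases hcA : c ∈ A
      · refine ⟨c, hcA, ?_⟩
        have hxc : x * c⁻¹ = c * x := by
          rw [xmul hx2 hconj (A.inv_mem hcA), inv_inv]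
        rw [hg, mul_assoc, hxc, pow_two, mul_assoc]
      · have hb : c * x ∈ A := decompB hx2 hxA hindex hcA
        refine ⟨c * x, hb, ?_⟩
        have hc' : c = (c * x) * x⁻¹ := by group
        have hxb : x * (c * x)⁻¹ = (c * x) * x := by
          rw [xmul hx2 hconj (A.inv_mem hb), inv_inv]
        calc g = c * x * c⁻¹ := hg
          _ = (c * x) * (x * (c * x)⁻¹) := by
              conv_lhs => rw [hc']
              group
          _ = (c * x) * ((c * x) * x) := by rw [hxb]
          _ = (c * x) ^ 2 * x := by rw [pow_two]; group
  · rintro (rfl | ⟨a, ha, rfl⟩)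
    · exact ⟨1, fun h => absurd (by group) h⟩
    · refine ⟨a, fun _ => ?_⟩
      calc a⁻¹ * (a ^ 2 * x) * a = a * (x * a) := by group
        _ = a * (a⁻¹ * x) := by rw [xmul hx2 hconj ha]
        _ = x := by group
end aux3

section aux4
variable {G : Type*} [Group G]

/-- allowed pairwise "differences" in an independent set -/
def isOK (A : Subgroup G) (x d g : G) : Prop :=
  g = 1 ∨ (∃ a ∈ A, g = a ^ 2 * x) ∨ g = d ∨ g = d⁻¹

lemma derQ_inv {H : Subgroup G} {g : G} (hg : g ∈ derQ G H) : g⁻¹ ∈ derQ G H := by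
  intro c hc
  exact hg c (by conv_lhs => rw [← hc, smul_smul, mul_inv_cancel, one_smul])

lemma notadj_iff {A : Subgroup G} {x : G} (hx2 : x ^ 2 = 1) (hxA : x ∉ A)
    (hindex : A.index = 2) (hcomm : ∀ a ∈ A, ∀ b ∈ A, a * b = b * a)
    (hconj : ∀ a ∈ A, x * a * x = a⁻¹) (d : G) {g h : G} (hne : g ≠ h) :
    ¬ (cayley G (derQ G (Subgroup.zpowers x) \ {d, d⁻¹})).Adj g h ↔ isOK A x d (g⁻¹ * h) := by
  constructor
  · intro hna
    by_contra hOK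
    apply hna
    refine (⟨hne, ⟨?_, ?_⟩, ⟨?_, ?_⟩⟩ : g ≠ h ∧ g⁻¹ * h ∈ derQ G (Subgroup.zpowers x) \ {d, d⁻¹} ∧
      h⁻¹ * g ∈ derQ G (Subgroup.zpowers x) \ {d, d⁻¹})
    · by_contra hnd
      rcases (notDer_iff hx2 hxA hindex hcomm hconj _).mp hnd with hcon | hcon
      · exact hOK (Or.inl hcon)
      · exact hOK (Or.inr (Or.inl hcon))
    · rintro (hcon | hcon)
      · exact hOK (Or.inr (Or.inr (Or.inl hcon)))
      · exact hOK (Or.inr (Or.inr (Or.inr hcon)))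
    · by_contra hnd
      rcases (notDer_iff hx2 hxA hindex hcomm hconj _).mp hnd with hcon | hcon
      · exact hOK (Or.inl (by rw [← inv_inv (g⁻¹*h)]; rw [show (g⁻¹*h)⁻¹ = h⁻¹*g by group, hcon]; group))
      · obtain ⟨a, ha, hee⟩ := hcon
        exfalso
        -- h⁻¹ * g = a^2 * x, so g⁻¹ * h = (a^2*x)⁻¹ = x⁻¹ * a⁻² = x a⁻² = a² x⁻¹... 
        apply hOK
        refine Or.inr (Or.inl ⟨a, ha, ?_⟩)
        have : g⁻¹ * h = (a ^ 2 * x)⁻¹ := by rw [← hee]; group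
        rw [this, mul_inv_rev, xinv hx2]
        rw [xmul hx2 hconj (A.inv_mem (A.pow_mem ha 2)), inv_inv]
    · rintro (hcon | hcon)
      · exact hOK (Or.inr (Or.inr (Or.inr (by rw [← hcon]; group))))
      · exact hOK (Or.inr (Or.inr (Or.inl (by rw [← inv_inv d, ← hcon]; group))))
  · intro hOK hadj
    obtain ⟨-, ⟨hder, hnotd⟩, -⟩ := (hadj : g ≠ h ∧ g⁻¹ * h ∈ derQ G (Subgroup.zpowers x) \ {d, d⁻¹} ∧
      h⁻¹ * g ∈ derQ G (Subgroup.zpowers x) \ {d, d⁻¹})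
    rcases hOK with hO | hO | hO | hO
    · exact (notDer_iff hx2 hxA hindex hcomm hconj _).mpr (Or.inl hO) hder
    · exact (notDer_iff hx2 hxA hindex hcomm hconj _).mpr (Or.inr hO) hder
    · exact hnotd (Or.inl hO)
    · exact hnotd (Or.inr hO)

lemma indepNum_eq {V : Type*} (X : SimpleGraph V) (k : ℕ)
    (h1 : ∃ s : Finset V, IsIndepSet X ↑s ∧ s.card = k)
    (h2 : ∀ s : Finset V, IsIndepSet X ↑s → s.card ≤ k) : indepNum X = k := by
  unfold indepNum
  apply le_antisymm
  · exact csSup_le ⟨k, h1⟩ (by rintro m ⟨s, hs, rfl⟩; exact h2 s hs)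
  · exact le_csSup ⟨k, by rintro m ⟨s, hs, rfl⟩; exact h2 s hs⟩ h1

end aux4
section aux5
open scoped Classical
variable {G : Type*} [Group G] {A : Subgroup G} {x : G}

lemma nmemA_diff (hx2 : x ^ 2 = 1) (hxA : x ∉ A) (hindex : A.index = 2)
    (hcomm : ∀ a ∈ A, ∀ b ∈ A, a * b = b * a) (hconj : ∀ a ∈ A, x * a * x = a⁻¹)
    {g h : G} (hg : g ∉ A) (hh : h ∉ A) : g⁻¹ * h ∈ A := by
  have hb : g * x ∈ A := decompB hx2 hxA hindex hg
  have hc : h * x ∈ A := decompB hx2 hxA hindex hh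
  have he : g⁻¹ * h = (x⁻¹)⁻¹ * ((g * x)⁻¹ * (h * x)) * x⁻¹ := by group
  rw [he]
  exact conjA hx2 hxA hindex hcomm hconj (A.mul_mem (A.inv_mem hb) hc) x⁻¹

lemma cross_diff {g h : G} (hg : g ∈ A) (hh : h ∉ A) : g⁻¹ * h ∉ A := by
  intro hcon
  exact hh (by rw [show h = g * (g⁻¹ * h) by group]; exact A.mul_mem hg hcon)

lemma cross_diff' {g h : G} (hg : g ∉ A) (hh : h ∈ A) : g⁻¹ * h ∉ A := by
  intro hcon
  exact hg (by rw [show g = h * (g⁻¹ * h)⁻¹ by group]; exact A.mul_mem hh (A.inv_mem hcon))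

lemma isOK_memA {d g : G} (hxA : x ∉ A) (hg : g ∈ A) (hOK : isOK A x d g) :
    g = 1 ∨ g = d ∨ g = d⁻¹ := by
  rcases hOK with h | ⟨a, ha, rfl⟩ | h | h
  · exact Or.inl h
  · exfalso
    apply hxA
    rw [show x = (a ^ 2)⁻¹ * (a ^ 2 * x) by group]
    exact A.mul_mem (A.inv_mem (A.pow_mem ha 2)) hg
  · exact Or.inr (Or.inl h)
  · exact Or.inr (Or.inr h)

lemma isOK_nmemA {d g : G} (hdA : d ∈ A) (hg : g ∉ A) (hOK : isOK A x d g) :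
    ∃ a ∈ A, g = a ^ 2 * x := by
  rcases hOK with rfl | h | rfl | rfl
  · exact absurd (A.one_mem) hg
  · exact h
  · exact absurd hdA hg
  · exact absurd (A.inv_mem hdA) hg

lemma diffs_card3 {d : G} (t : Finset G)
    (ht : ∀ g ∈ t, ∀ h ∈ t, g⁻¹ * h = 1 ∨ g⁻¹ * h = d ∨ g⁻¹ * h = d⁻¹) : t.card ≤ 3 := by
  rcases t.eq_empty_or_nonempty with rfl | ⟨g₀, hg₀⟩
  · simp
  · have hsub : t ⊆ {g₀, g₀ * d, g₀ * d⁻¹} := by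
      intro h hh
      have := ht g₀ hg₀ h hh
      simp only [Finset.mem_insert, Finset.mem_singleton]
      rcases this with h1 | h1 | h1
      · exact Or.inl (by rw [show h = g₀ * (g₀⁻¹ * h) by group, h1, mul_one])
      · exact Or.inr (Or.inl (by rw [show h = g₀ * (g₀⁻¹ * h) by group, h1]))
      · exact Or.inr (Or.inr (by rw [show h = g₀ * (g₀⁻¹ * h) by group, h1]))
    calc t.card ≤ ({g₀, g₀ * d, g₀ * d⁻¹} : Finset G).card := Finset.card_le_card hsub
      _ ≤ 3 := by
        apply le_trans (Finset.card_insert_le _ _)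
        apply Nat.succ_le_succ
        apply le_trans (Finset.card_insert_le _ _)
        simp

lemma diffs_card1 (t : Finset G)
    (ht : ∀ g ∈ t, ∀ h ∈ t, g⁻¹ * h = 1) : t.card ≤ 1 := by
  apply Finset.card_le_one.mpr
  intro g hg h hh
  have := ht g hg h hh
  rw [show h = g * (g⁻¹ * h) by group, this, mul_one]

lemma diffs_card2 {d : G} (hd3 : orderOf d ≠ 3) (t : Finset G)
    (ht : ∀ g ∈ t, ∀ h ∈ t, g⁻¹ * h = 1 ∨ g⁻¹ * h = d ∨ g⁻¹ * h = d⁻¹) : t.card ≤ 2 := by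
  by_contra hcon
  push_neg at hcon
  have h3 : 3 ≤ t.card := hcon
  obtain ⟨g, hg⟩ : t.Nonempty := Finset.card_pos.mp (by omega)
  have herase : 1 < (t.erase g).card := by
    have := Finset.card_erase_of_mem hg
    omega
  obtain ⟨h, hh, k, hk, hhk⟩ := Finset.one_lt_card.mp herase
  have hhg : h ≠ g := Finset.ne_of_mem_erase hh
  have hkg : k ≠ g := Finset.ne_of_mem_erase hk
  have hh' : h ∈ t := Finset.mem_of_mem_erase hh
  have hk' : k ∈ t := Finset.mem_of_mem_erase hk
  have hd1 : d ≠ 1 := by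
    rintro rfl
    rcases ht g hg h hh' with h1 | h1 | h1 <;>
      exact hhg.symm (by rw [show h = g * (g⁻¹ * h) by group, h1]; simp)
  have hdne : ∀ u v : G, u ∈ t → v ∈ t → u ≠ v → u⁻¹ * v = d ∨ u⁻¹ * v = d⁻¹ := by
    intro u v hu hv huv
    rcases ht u hu v hv with h1 | h1 | h1
    · exact absurd (by rw [show v = u * (u⁻¹ * v) by group, h1, mul_one]) huv.symm
    · exact Or.inl h1
    · exact Or.inr h1
  have hd3' : ¬ d ^ 3 = 1 := by
    intro hcon3
    exact hd3 (orderOf_eq_prime hcon3 hd1)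
  have e1 := hdne g h hg hh' hhg.symm
  have e2 := hdne g k hg hk' hkg.symm
  have e3 := hdne h k hh' hk' hhk
  have hk_eq : h⁻¹ * k = (g⁻¹ * h)⁻¹ * (g⁻¹ * k) := by group
  rcases e1 with f1 | f1 <;> rcases e2 with f2 | f2
  · apply hhk
    rw [show h = g * (g⁻¹ * h) by group, f1, ← f2]
    group
  · rw [f1, f2] at hk_eq
    rcases e3 with f3 | f3 <;> rw [hk_eq] at f3
    · apply hd3'
      have h31 : d * d * (d⁻¹ * d⁻¹) = 1 := by group
      rw [f3] at h31
      rw [pow_succ, pow_two]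
      exact h31
    · apply hd1
      have : d⁻¹ * d⁻¹ = d⁻¹ * 1 := by rw [f3, mul_one]
      have h4 := mul_left_cancel this
      rwa [inv_eq_one] at h4
  · rw [f1, f2, inv_inv] at hk_eq
    rcases e3 with f3 | f3 <;> rw [hk_eq] at f3
    · apply hd1
      have : d * d = 1 * d := by rw [f3, one_mul]
      exact mul_right_cancel this
    · apply hd3'
      rw [pow_succ, pow_two, f3]
      exact inv_mul_cancel d
  · apply hhk
    rw [show h = g * (g⁻¹ * h) by group, f1, ← f2]
    group
end aux5
section aux6
open scoped Classical
variable {G : Type*} [Group G] {A : Subgroup G} {x d : G}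

lemma same_coset_diff (hx2 : x ^ 2 = 1) (hxA : x ∉ A) (hindex : A.index = 2)
    (hcomm : ∀ a ∈ A, ∀ b ∈ A, a * b = b * a) (hconj : ∀ a ∈ A, x * a * x = a⁻¹)
    {s : Finset G}
    (hs : IsIndepSet (cayley G (derQ G (Subgroup.zpowers x) \ {d, d⁻¹})) ↑s)
    {g h : G} (hg : g ∈ s) (hh : h ∈ s) (hA : g⁻¹ * h ∈ A) :
    g⁻¹ * h = 1 ∨ g⁻¹ * h = d ∨ g⁻¹ * h = d⁻¹ := by
  by_cases hne : g = h
  · left; rw [hne]; group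
  · have hna := hs (Finset.mem_coe.mpr hg) (Finset.mem_coe.mpr hh) hne
    have hOK := (notadj_iff hx2 hxA hindex hcomm hconj d hne).mp hna
    exact isOK_memA hxA hA hOK

lemma cross_sq (hx2 : x ^ 2 = 1) (hxA : x ∉ A) (hindex : A.index = 2)
    (hcomm : ∀ a ∈ A, ∀ b ∈ A, a * b = b * a) (hconj : ∀ a ∈ A, x * a * x = a⁻¹)
    (hdA : d ∈ A) {s : Finset G}
    (hs : IsIndepSet (cayley G (derQ G (Subgroup.zpowers x) \ {d, d⁻¹})) ↑s)
    {g h k : G} (hg : g ∈ s) (hh : h ∈ s) (hk : k ∈ s)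
    (hgk : g⁻¹ * k ∉ A) (hhk : h⁻¹ * k ∉ A)
    (hgh : g⁻¹ * h = d ∨ g⁻¹ * h = d⁻¹) : ∃ a ∈ A, d = a ^ 2 := by
  have hgkne : g ≠ k := by rintro rfl; exact hgk (by rw [inv_mul_cancel]; exact A.one_mem)
  have hhkne : h ≠ k := by rintro rfl; exact hhk (by rw [inv_mul_cancel]; exact A.one_mem)
  obtain ⟨a, ha, hae⟩ := isOK_nmemA hdA hgk
    ((notadj_iff hx2 hxA hindex hcomm hconj d hgkne).mp
      (hs (Finset.mem_coe.mpr hg) (Finset.mem_coe.mpr hk) hgkne))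
  obtain ⟨b, hb, hbe⟩ := isOK_nmemA hdA hhk
    ((notadj_iff hx2 hxA hindex hcomm hconj d hhkne).mp
      (hs (Finset.mem_coe.mpr hh) (Finset.mem_coe.mpr hk) hhkne))
  have key : g⁻¹ * h = (a * b⁻¹) ^ 2 := by
    have e1 : g⁻¹ * h = (g⁻¹ * k) * (h⁻¹ * k)⁻¹ := by group
    rw [hae, hbe] at e1
    have e2 : a ^ 2 * x * (b ^ 2 * x)⁻¹ = a ^ 2 * (b ^ 2)⁻¹ := by group
    rw [e2] at e1
    rw [e1]
    have e3 : (a * b⁻¹) ^ 2 = a * (b⁻¹ * a) * b⁻¹ := by rw [pow_two]; group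
    rw [e3, hcomm _ (A.inv_mem hb) _ ha]
    rw [show a * (a * b⁻¹) * b⁻¹ = a ^ 2 * (b ^ 2)⁻¹ by rw [pow_two, pow_two]; group]
  rcases hgh with hgh | hgh
  · exact ⟨a * b⁻¹, A.mul_mem ha (A.inv_mem hb), by rw [← hgh, key]⟩
  · refine ⟨(a * b⁻¹)⁻¹, A.inv_mem (A.mul_mem ha (A.inv_mem hb)), ?_⟩
    have : d⁻¹ = (a * b⁻¹) ^ 2 := by rw [← hgh, key]
    rw [show ((a * b⁻¹)⁻¹) ^ 2 = ((a * b⁻¹) ^ 2)⁻¹ by rw [pow_two, pow_two]; group]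
    rw [← this, inv_inv]
end aux6
section aux7
open scoped Classical
variable {G : Type*} [Group G] {A : Subgroup G} {x d : G}

lemma ub_main (hx2 : x ^ 2 = 1) (hxA : x ∉ A) (hindex : A.index = 2)
    (hcomm : ∀ a ∈ A, ∀ b ∈ A, a * b = b * a) (hconj : ∀ a ∈ A, x * a * x = a⁻¹)
    {s : Finset G}
    (hs : IsIndepSet (cayley G (derQ G (Subgroup.zpowers x) \ {d, d⁻¹})) ↑s) :
    s.card ≤ 6 ∧
    (orderOf d ≠ 3 → s.card ≤ 4) ∧
    (d ∉ A → s.card ≤ 2) ∧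
    (d ∈ A → orderOf d ≠ 3 → (¬∃ a ∈ A, d = a ^ 2) → s.card ≤ 2) := by
  set sA := s.filter (fun g => g ∈ A) with hsA
  set sB := s.filter (fun g => g ∉ A) with hsB
  have hcard : sA.card + sB.card = s.card :=
    Finset.card_filter_add_card_filter_not (fun g => g ∈ A)
  have hAmem : ∀ g ∈ sA, g ∈ s ∧ g ∈ A := by
    intro g hg; exact ⟨(Finset.mem_filter.mp hg).1, (Finset.mem_filter.mp hg).2⟩
  have hBmem : ∀ g ∈ sB, g ∈ s ∧ g ∉ A := by
    intro g hg; exact ⟨(Finset.mem_filter.mp hg).1, (Finset.mem_filter.mp hg).2⟩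
  have hAdiff : ∀ g ∈ sA, ∀ h ∈ sA, g⁻¹ * h = 1 ∨ g⁻¹ * h = d ∨ g⁻¹ * h = d⁻¹ := by
    intro g hg h hh
    exact same_coset_diff hx2 hxA hindex hcomm hconj hs (hAmem g hg).1 (hAmem h hh).1
      (A.mul_mem (A.inv_mem (hAmem g hg).2) (hAmem h hh).2)
  have hBdiff : ∀ g ∈ sB, ∀ h ∈ sB, g⁻¹ * h = 1 ∨ g⁻¹ * h = d ∨ g⁻¹ * h = d⁻¹ := by
    intro g hg h hh
    exact same_coset_diff hx2 hxA hindex hcomm hconj hs (hBmem g hg).1 (hBmem h hh).1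
      (nmemA_diff hx2 hxA hindex hcomm hconj (hBmem g hg).2 (hBmem h hh).2)
  refine ⟨?_, ?_, ?_, ?_⟩
  · have := diffs_card3 sA hAdiff
    have := diffs_card3 sB hBdiff
    omega
  · intro h3
    have := diffs_card2 h3 sA hAdiff
    have := diffs_card2 h3 sB hBdiff
    omega
  · intro hdA
    have hA1 : ∀ g ∈ sA, ∀ h ∈ sA, g⁻¹ * h = 1 := by
      intro g hg h hh
      rcases hAdiff g hg h hh with h1 | h1 | h1
      · exact h1
      · exact absurd (h1 ▸ A.mul_mem (A.inv_mem (hAmem g hg).2) (hAmem h hh).2) hdA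
      · exfalso; apply hdA
        rw [← inv_inv d]
        exact A.inv_mem (h1 ▸ A.mul_mem (A.inv_mem (hAmem g hg).2) (hAmem h hh).2)
    have hB1 : ∀ g ∈ sB, ∀ h ∈ sB, g⁻¹ * h = 1 := by
      intro g hg h hh
      have hmem := nmemA_diff hx2 hxA hindex hcomm hconj (hBmem g hg).2 (hBmem h hh).2
      rcases hBdiff g hg h hh with h1 | h1 | h1
      · exact h1
      · exact absurd (h1 ▸ hmem) hdA
      · exfalso; apply hdA
        rw [← inv_inv d]
        exact A.inv_mem (h1 ▸ hmem)
    have := diffs_card1 sA hA1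
    have := diffs_card1 sB hB1
    omega
  · intro hdA h3 hnsq
    by_contra hbig
    push_neg at hbig
    have c1 := diffs_card2 h3 sA hAdiff
    have c2 := diffs_card2 h3 sB hBdiff
    have hsplit : (2 ≤ sA.card ∧ 1 ≤ sB.card) ∨ (2 ≤ sB.card ∧ 1 ≤ sA.card) := by omega
    apply hnsq
    rcases hsplit with ⟨h2c, h1c⟩ | ⟨h2c, h1c⟩
    · obtain ⟨g, hg, h, hh, hgh⟩ := Finset.one_lt_card.mp h2c
      obtain ⟨k, hk⟩ := Finset.card_pos.mp h1c
      have hdgh : g⁻¹ * h = d ∨ g⁻¹ * h = d⁻¹ := by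
        rcases hAdiff g hg h hh with h1 | h1 | h1
        · exact absurd (inv_mul_eq_one.mp h1) hgh
        · exact Or.inl h1
        · exact Or.inr h1
      exact cross_sq hx2 hxA hindex hcomm hconj hdA hs (hAmem g hg).1 (hAmem h hh).1
        (hBmem k hk).1 (cross_diff (hAmem g hg).2 (hBmem k hk).2)
        (cross_diff (hAmem h hh).2 (hBmem k hk).2) hdgh
    · obtain ⟨g, hg, h, hh, hgh⟩ := Finset.one_lt_card.mp h2c
      obtain ⟨k, hk⟩ := Finset.card_pos.mp h1c
      have hdgh : g⁻¹ * h = d ∨ g⁻¹ * h = d⁻¹ := by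
        rcases hBdiff g hg h hh with h1 | h1 | h1
        · exact absurd (inv_mul_eq_one.mp h1) hgh
        · exact Or.inl h1
        · exact Or.inr h1
      exact cross_sq hx2 hxA hindex hcomm hconj hdA hs (hBmem g hg).1 (hBmem h hh).1
        (hAmem k hk).1 (cross_diff' (hBmem g hg).2 (hAmem k hk).2)
        (cross_diff' (hBmem h hh).2 (hAmem k hk).2) hdgh
end aux7
section aux8
open scoped Classical
variable {G : Type*} [Group G] {A : Subgroup G} {x d : G}

lemma indep_of (hx2 : x ^ 2 = 1) (hxA : x ∉ A) (hindex : A.index = 2)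
    (hcomm : ∀ a ∈ A, ∀ b ∈ A, a * b = b * a) (hconj : ∀ a ∈ A, x * a * x = a⁻¹)
    (s : Finset G) (h : ∀ g ∈ s, ∀ h' ∈ s, g ≠ h' → isOK A x d (g⁻¹ * h')) :
    IsIndepSet (cayley G (derQ G (Subgroup.zpowers x) \ {d, d⁻¹})) ↑s := by
  intro g hg h' hh' hne
  exact (notadj_iff hx2 hxA hindex hcomm hconj d hne).mpr
    (h g (Finset.mem_coe.mp hg) h' (Finset.mem_coe.mp hh') hne)

lemma neAx (hxA : x ∉ A) {a b : G} (ha : a ∈ A) (hb : b ∈ A) : a ≠ b * x := by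
  intro h
  exact hxA (by rw [show x = b⁻¹ * a by rw [h]; group]; exact A.mul_mem (A.inv_mem hb) ha)

lemma neAx0 (hxA : x ∉ A) {a : G} (ha : a ∈ A) : a ≠ x := by
  intro h; exact hxA (h ▸ ha)

lemma lb2 (hx2 : x ^ 2 = 1) (hxA : x ∉ A) (hindex : A.index = 2)
    (hcomm : ∀ a ∈ A, ∀ b ∈ A, a * b = b * a) (hconj : ∀ a ∈ A, x * a * x = a⁻¹) :
    ∃ s : Finset G,
      IsIndepSet (cayley G (derQ G (Subgroup.zpowers x) \ {d, d⁻¹})) ↑s ∧ s.card = 2 := by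
  refine ⟨{1, x}, ?_, ?_⟩
  · apply indep_of hx2 hxA hindex hcomm hconj
    intro g hg h' hh' hne
    simp only [Finset.mem_insert, Finset.mem_singleton] at hg hh'
    have okx : isOK A x d x := Or.inr (Or.inl ⟨1, A.one_mem, by rw [one_pow, one_mul]⟩)
    rcases hg with rfl | rfl <;> rcases hh' with rfl | rfl
    · exact absurd rfl hne
    · rw [inv_one, one_mul]; exact okx
    · rw [mul_one, xinv hx2]; exact okx
    · exact absurd rfl hne
  · rw [Finset.card_insert_of_notMem (by simp [(neAx0 hxA A.one_mem)]),
      Finset.card_singleton]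
end aux8
section aux9
open scoped Classical
variable {G : Type*} [Group G] {A : Subgroup G} {x d : G}

lemma lb4 (hx2 : x ^ 2 = 1) (hxA : x ∉ A) (hindex : A.index = 2)
    (hcomm : ∀ a ∈ A, ∀ b ∈ A, a * b = b * a) (hconj : ∀ a ∈ A, x * a * x = a⁻¹)
    (hdA : d ∈ A) (hd1 : d ≠ 1) {e : G} (he : e ∈ A) (hde : d = e ^ 2) :
    ∃ s : Finset G,
      IsIndepSet (cayley G (derQ G (Subgroup.zpowers x) \ {d, d⁻¹})) ↑s ∧ s.card = 4 := by
  have okx : isOK A x d x := Or.inr (Or.inl ⟨1, A.one_mem, by rw [one_pow, one_mul]⟩)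
  have okd : isOK A x d d := Or.inr (Or.inr (Or.inl rfl))
  have okdi : isOK A x d d⁻¹ := Or.inr (Or.inr (Or.inr rfl))
  have okdx : isOK A x d (d * x) :=
    Or.inr (Or.inl ⟨e, he, by rw [hde]⟩)
  have okdix : isOK A x d (d⁻¹ * x) :=
    Or.inr (Or.inl ⟨e⁻¹, A.inv_mem he, by rw [hde, pow_two, pow_two]; group⟩)
  refine ⟨{1, d, x, d * x}, ?_, ?_⟩
  · apply indep_of hx2 hxA hindex hcomm hconj
    intro g hg h' hh' hne
    simp only [Finset.mem_insert, Finset.mem_singleton] at hg hh'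
    rcases hg with hg1 | hg1 | hg1 | hg1 <;> rcases hh' with hh1 | hh1 | hh1 | hh1 <;>
      rw [hg1, hh1] at hne ⊢
    · exact absurd rfl hne
    · rw [inv_one, one_mul]; exact okd
    · rw [inv_one, one_mul]; exact okx
    · rw [inv_one, one_mul]; exact okdx
    · rw [mul_one]; exact okdi
    · exact absurd rfl hne
    · exact okdix
    · rw [show d⁻¹ * (d * x) = x by group]; exact okx
    · rw [mul_one, xinv hx2]; exact okx
    · rw [xinv hx2, xmul hx2 hconj hdA]; exact okdix
    · exact absurd rfl hne
    · rw [show (x)⁻¹ * (d * x) = x⁻¹ * d * x from by group, xinv hx2, hconj d hdA]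
      exact okdi
    · rw [mul_one, mul_inv_rev, xinv hx2, xmul hx2 hconj (A.inv_mem hdA), inv_inv]
      exact okdx
    · rw [show (d * x)⁻¹ * d = x⁻¹ from by group, xinv hx2]; exact okx
    · rw [show (d * x)⁻¹ * x = x⁻¹ * d⁻¹ * x from by group, xinv hx2,
        hconj d⁻¹ (A.inv_mem hdA), inv_inv]
      exact okd
    · exact absurd rfl hne
  · have n1 : (1 : G) ≠ d := hd1.symm
    have n2 : (1 : G) ≠ x := neAx0 hxA A.one_mem
    have n3 : (1 : G) ≠ d * x := neAx hxA A.one_mem hdA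
    have n4 : d ≠ x := neAx0 hxA hdA
    have n5 : d ≠ d * x := neAx hxA hdA hdA
    have n6 : x ≠ d * x := by
      intro h
      exact hd1 (mul_right_cancel (b := x) (c := (1:G)) (by rw [one_mul, ← h]))
    rw [Finset.card_insert_of_notMem (by simp [n1, n2, n3]),
      Finset.card_insert_of_notMem (by simp [n4, n5]),
      Finset.card_insert_of_notMem (by simp [n6]), Finset.card_singleton]
end aux9
section aux10
open scoped Classical
variable {G : Type*} [Group G] {A : Subgroup G} {x d : G}

lemma lb6 (hx2 : x ^ 2 = 1) (hxA : x ∉ A) (hindex : A.index = 2)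
    (hcomm : ∀ a ∈ A, ∀ b ∈ A, a * b = b * a) (hconj : ∀ a ∈ A, x * a * x = a⁻¹)
    (hdA : d ∈ A) (hd3 : orderOf d = 3) :
    ∃ s : Finset G,
      IsIndepSet (cayley G (derQ G (Subgroup.zpowers x) \ {d, d⁻¹})) ↑s ∧ s.card = 6 := by
  have hdc : d ^ 3 = 1 := by rw [← hd3]; exact pow_orderOf_eq_one d
  have hd1 : d ≠ 1 := by
    intro h; rw [h, orderOf_one] at hd3; norm_num at hd3
  have hd21 : d ^ 2 ≠ 1 := by
    intro h
    have := orderOf_dvd_of_pow_eq_one h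
    rw [hd3] at this
    norm_num at this
  have hdd2 : d ≠ d ^ 2 := by
    intro h
    apply hd1
    have : d * 1 = d * d := by rw [mul_one]; conv_lhs => rw [h, pow_two]
    exact (mul_left_cancel this).symm
  have hz3 : d ^ (3:ℤ) = 1 := by
    rw [show (3:ℤ) = ((3:ℕ):ℤ) by norm_num, zpow_natCast, hdc]
  have hinv2 : d⁻¹ = d ^ 2 := by
    apply inv_eq_of_mul_eq_one_right
    rw [← pow_succ']
    exact hdc
  have okpow : ∀ m : ℤ, d ^ m = 1 ∨ d ^ m = d ∨ d ^ m = d ^ 2 := by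
    intro m
    have hm : m = 3 * (m / 3) + m % 3 := (Int.mul_ediv_add_emod m 3).symm
    have he : d ^ m = d ^ (m % 3) := by
      conv_lhs => rw [hm]
      rw [zpow_add, zpow_mul, hz3, one_zpow, one_mul]
    have h012 : m % 3 = 0 ∨ m % 3 = 1 ∨ m % 3 = 2 := by omega
    rcases h012 with h | h | h <;> rw [he, h]
    · left; exact zpow_zero d
    · right; left; exact zpow_one d
    · right; right; rw [show (2:ℤ) = ((2:ℕ):ℤ) by norm_num, zpow_natCast]
  have okA' : ∀ m : ℤ, isOK A x d (d ^ m) := by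
    intro m
    rcases okpow m with h | h | h <;> rw [h]
    · exact Or.inl rfl
    · exact Or.inr (Or.inr (Or.inl rfl))
    · exact Or.inr (Or.inr (Or.inr hinv2.symm))
  have okB' : ∀ m : ℤ, isOK A x d (d ^ m * x) := by
    intro m
    rcases okpow m with h | h | h <;> rw [h]
    · exact Or.inr (Or.inl ⟨1, A.one_mem, by rw [one_pow]⟩)
    · refine Or.inr (Or.inl ⟨d ^ 2, A.pow_mem hdA 2, ?_⟩)
      have : (d ^ 2) ^ 2 = d := by
        rw [← pow_mul]
        rw [show 2 * 2 = 4 by norm_num, show (4:ℕ) = 3 + 1 by norm_num, pow_succ, hdc, one_mul]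
      rw [this]
    · exact Or.inr (Or.inl ⟨d, hdA, rfl⟩)
  have dpow : ∀ i j : ℕ, (d ^ i)⁻¹ * d ^ j = d ^ ((j:ℤ) - (i:ℤ)) := by
    intro i j
    rw [zpow_sub, zpow_natCast, zpow_natCast]
    exact ((Commute.refl d).pow_pow i j).inv_left.eq
  have okAA : ∀ i j : ℕ, isOK A x d ((d ^ i)⁻¹ * d ^ j) := by
    intro i j; rw [dpow]; exact okA' _
  have okAB : ∀ i j : ℕ, isOK A x d ((d ^ i)⁻¹ * (d ^ j * x)) := by
    intro i j; rw [← mul_assoc, dpow]; exact okB' _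
  have okBA : ∀ i j : ℕ, isOK A x d ((d ^ i * x)⁻¹ * d ^ j) := by
    intro i j
    rw [show (d ^ i * x)⁻¹ * d ^ j = x⁻¹ * ((d ^ i)⁻¹ * d ^ j) from by group,
      dpow, xinv hx2, xmul hx2 hconj (A.zpow_mem hdA _), ← zpow_neg]
    exact okB' _
  have okBB : ∀ i j : ℕ, isOK A x d ((d ^ i * x)⁻¹ * (d ^ j * x)) := by
    intro i j
    rw [show (d ^ i * x)⁻¹ * (d ^ j * x) = x⁻¹ * ((d ^ i)⁻¹ * d ^ j) * x from by group,
      dpow, xinv hx2, hconj _ (A.zpow_mem hdA _), ← zpow_neg]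
    exact okA' _
  refine ⟨{1, d, d ^ 2, x, d * x, d ^ 2 * x}, ?_, ?_⟩
  · apply indep_of hx2 hxA hindex hcomm hconj
    intro g hg h' hh' hne
    simp only [Finset.mem_insert, Finset.mem_singleton] at hg hh'
    rcases hg with hg1 | hg1 | hg1 | hg1 | hg1 | hg1 <;>
      rcases hh' with hh1 | hh1 | hh1 | hh1 | hh1 | hh1 <;>
      rw [hg1, hh1] at hne ⊢
    · exact absurd rfl hne
    · simpa using okAA 0 1
    · simpa using okAA 0 2
    · simpa using okAB 0 0
    · simpa using okAB 0 1
    · simpa using okAB 0 2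
    · simpa using okAA 1 0
    · exact absurd rfl hne
    · simpa using okAA 1 2
    · simpa using okAB 1 0
    · simpa using okAB 1 1
    · simpa using okAB 1 2
    · simpa using okAA 2 0
    · simpa using okAA 2 1
    · exact absurd rfl hne
    · simpa using okAB 2 0
    · simpa using okAB 2 1
    · simpa using okAB 2 2
    · simpa using okBA 0 0
    · simpa using okBA 0 1
    · simpa using okBA 0 2
    · exact absurd rfl hne
    · simpa using okBB 0 1
    · simpa using okBB 0 2
    · simpa using okBA 1 0
    · simpa using okBA 1 1
    · simpa using okBA 1 2
    · simpa using okBB 1 0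
    · exact absurd rfl hne
    · simpa using okBB 1 2
    · simpa using okBA 2 0
    · simpa using okBA 2 1
    · simpa using okBA 2 2
    · simpa using okBB 2 0
    · simpa using okBB 2 1
    · exact absurd rfl hne
  · have n12 : (1:G) ≠ d := hd1.symm
    have n13 : (1:G) ≠ d ^ 2 := fun h => hd21 h.symm
    have n23 : d ≠ d ^ 2 := hdd2
    have n14 : (1:G) ≠ x := neAx0 hxA A.one_mem
    have n15 : (1:G) ≠ d * x := neAx hxA A.one_mem hdA
    have n16 : (1:G) ≠ d ^ 2 * x := neAx hxA A.one_mem (A.pow_mem hdA 2)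
    have n24 : d ≠ x := neAx0 hxA hdA
    have n25 : d ≠ d * x := neAx hxA hdA hdA
    have n26 : d ≠ d ^ 2 * x := neAx hxA hdA (A.pow_mem hdA 2)
    have n34 : d ^ 2 ≠ x := neAx0 hxA (A.pow_mem hdA 2)
    have n35 : d ^ 2 ≠ d * x := neAx hxA (A.pow_mem hdA 2) hdA
    have n36 : d ^ 2 ≠ d ^ 2 * x := neAx hxA (A.pow_mem hdA 2) (A.pow_mem hdA 2)
    have n45 : x ≠ d * x := by
      intro h; exact hd1 (mul_right_cancel (b := x) (c := (1:G)) (by rw [one_mul, ← h]))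
    have n46 : x ≠ d ^ 2 * x := by
      intro h; exact hd21 (mul_right_cancel (b := x) (c := (1:G)) (by rw [one_mul, ← h]))
    have n56 : d * x ≠ d ^ 2 * x := by
      intro h; exact hdd2 (mul_right_cancel (b := x) h)
    rw [Finset.card_insert_of_notMem (by simp [n12, n13, n14, n15, n16]),
      Finset.card_insert_of_notMem (by simp [n23, n24, n25, n26]),
      Finset.card_insert_of_notMem (by simp [n34, n35, n36]),
      Finset.card_insert_of_notMem (by simp [n45, n46]),
      Finset.card_insert_of_notMem (by simp [n56]), Finset.card_singleton]
end aux10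
/-- Let `n` be even, `A` abelian of order `n`, and `G = D(A)` (presented
abstractly) acting on the left cosets of `H = ⟨x⟩`. For `D = {d, d⁻¹} ⊆ Der(G)`, the
independence number `α` of `Cay(G, Der(G) \ D)` lies in `{2, 4, 6}`; it is 6 iff
`d ∈ A` and `d` has order 3; it is 4 iff `d` does not have order 3 and `d = a²` for
some `a ∈ A`; and it is 2 otherwise. -/
theorem stmt_10 {G : Type*} [Group G] [Fintype G]
    (A : Subgroup G) (hcomm : ∀ a ∈ A, ∀ b ∈ A, a * b = b * a)
    (hEven : Even (Nat.card A))
    (x : G) (hx2 : x ^ 2 = 1) (hxA : x ∉ A) (hindex : A.index = 2)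
    (hconj : ∀ a ∈ A, x * a * x = a⁻¹)
    (d : G) (hd : ({d, d⁻¹} : Set G) ⊆ derQ G (Subgroup.zpowers x)) :
    indepNum (cayley G (derQ G (Subgroup.zpowers x) \ {d, d⁻¹})) ∈ ({2, 4, 6} : Set ℕ) ∧
    (indepNum (cayley G (derQ G (Subgroup.zpowers x) \ {d, d⁻¹})) = 6 ↔
      d ∈ A ∧ orderOf d = 3) ∧
    (indepNum (cayley G (derQ G (Subgroup.zpowers x) \ {d, d⁻¹})) = 4 ↔
      orderOf d ≠ 3 ∧ ∃ a ∈ A, d = a ^ 2) := by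
  have hdDer : d ∈ derQ G (Subgroup.zpowers x) := hd (Set.mem_insert d _)
  have hd1 : d ≠ 1 := by
    rintro rfl
    exact (notDer_iff hx2 hxA hindex hcomm hconj 1).mpr (Or.inl rfl) hdDer
  by_cases hdA : d ∈ A
  · by_cases hord : orderOf d = 3
    · have hval : indepNum (cayley G (derQ G (Subgroup.zpowers x) \ {d, d⁻¹})) = 6 :=
        indepNum_eq _ 6 (lb6 hx2 hxA hindex hcomm hconj hdA hord)
          (fun s hs => (ub_main hx2 hxA hindex hcomm hconj hs).1)
      rw [hval]
      refine ⟨by norm_num, ⟨fun _ => ⟨hdA, hord⟩, fun _ => rfl⟩,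
        ⟨fun h => by norm_num at h, fun ⟨h3, _⟩ => absurd hord h3⟩⟩
    · by_cases hsq : ∃ a ∈ A, d = a ^ 2
      · obtain ⟨e, he, hde⟩ := hsq
        have hval : indepNum (cayley G (derQ G (Subgroup.zpowers x) \ {d, d⁻¹})) = 4 :=
          indepNum_eq _ 4 (lb4 hx2 hxA hindex hcomm hconj hdA hd1 he hde)
            (fun s hs => (ub_main hx2 hxA hindex hcomm hconj hs).2.1 hord)
        rw [hval]
        exact ⟨by norm_num, ⟨fun h => by norm_num at h, fun ⟨_, h3⟩ => absurd h3 hord⟩,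
          ⟨fun _ => ⟨hord, e, he, hde⟩, fun _ => rfl⟩⟩
      · have hval : indepNum (cayley G (derQ G (Subgroup.zpowers x) \ {d, d⁻¹})) = 2 :=
          indepNum_eq _ 2 (lb2 hx2 hxA hindex hcomm hconj)
            (fun s hs => (ub_main hx2 hxA hindex hcomm hconj hs).2.2.2 hdA hord hsq)
        rw [hval]
        exact ⟨by norm_num, ⟨fun h => by norm_num at h, fun ⟨_, h3⟩ => absurd h3 hord⟩,
          ⟨fun h => by norm_num at h, fun ⟨_, hsq'⟩ => absurd hsq' hsq⟩⟩
  · have hval : indepNum (cayley G (derQ G (Subgroup.zpowers x) \ {d, d⁻¹})) = 2 :=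
      indepNum_eq _ 2 (lb2 hx2 hxA hindex hcomm hconj)
        (fun s hs => (ub_main hx2 hxA hindex hcomm hconj hs).2.2.1 hdA)
    rw [hval]
    exact ⟨by norm_num, ⟨fun h => by norm_num at h, fun ⟨hA', _⟩ => absurd hA' hdA⟩,
      ⟨fun h => by norm_num at h,
        fun ⟨_, a, ha, hde⟩ => absurd (hde ▸ A.pow_mem ha 2) hdA⟩⟩
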